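/- Let $f_1, f_2, V : S^1 \times [0,T) \to \mathbb{R}_{>0}$ be $C^2$ functions satisfying the system $\partial_t f_i = \frac{1}{V}\big(\frac{f_i''}{V} - \frac{f_i' V'}{V^2}\big) - \frac{1}{3} f_i \mathcal{T}$ for $i = 1, 2$ and $\partial_t V = \frac{1}{3}\mathcal{T} V$, where $\mathcal{T} = V^{-2}\big\{((\log f_1)')^2 + ((\log f_2)')^2 + ((\log f_1 + \log f_2)')^2\big\}$. Define $f_3 = f_1^{-1} f_2^{-1}$. Then $f_3$ also satisfies $\partial_t f_3 = \frac{1}{V}\big(\frac{f_3''}{V} - \frac{f_3' V'}{V^2}\big) - \frac{1}{3} f_3 \mathcal{T}$. -/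

import Mathlib

open Real

set_option maxHeartbeats 2000000 in
/-- If `f₁, f₂, V > 0` solve the reduced system
`∂ₜfᵢ = (fᵢ''/V - fᵢ'V'/V²)/V - fᵢ𝒯/3` (`i = 1,2`), `∂ₜV = 𝒯V/3`, with
`𝒯 = V⁻²{((log f₁)')² + ((log f₂)')² + ((log f₁ + log f₂)')²}`, then
`f₃ = f₁⁻¹f₂⁻¹` satisfies the same equation `∂ₜf₃ = (f₃''/V - f₃'V'/V²)/V - f₃𝒯/3`. -/
theorem stmt_10 (T0 : ℝ) (hT0 : 0 < T0) (f1 f2 V 𝒯 f3 : ℝ → ℝ → ℝ)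
    (hf1smooth : ContDiff ℝ 2 (fun p : ℝ × ℝ => f1 p.1 p.2))
    (hf2smooth : ContDiff ℝ 2 (fun p : ℝ × ℝ => f2 p.1 p.2))
    (hVsmooth : ContDiff ℝ 2 (fun p : ℝ × ℝ => V p.1 p.2))
    (hf1pos : ∀ x t, 0 < f1 x t) (hf2pos : ∀ x t, 0 < f2 x t)
    (hVpos : ∀ x t, 0 < V x t)
    (hper1 : ∀ x t, f1 (x + 2 * π) t = f1 x t)
    (hper2 : ∀ x t, f2 (x + 2 * π) t = f2 x t)
    (hperV : ∀ x t, V (x + 2 * π) t = V x t)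
    (h𝒯 : 𝒯 = fun x t => (1 / (V x t)^2) *
      ((deriv (fun y => Real.log (f1 y t)) x)^2 +
       (deriv (fun y => Real.log (f2 y t)) x)^2 +
       (deriv (fun y => Real.log (f1 y t) + Real.log (f2 y t)) x)^2))
    (hpde1 : ∀ x, ∀ t ∈ Set.Ico (0 : ℝ) T0,
      HasDerivAt (fun s => f1 x s)
        ((1 / V x t) * (deriv (fun y => deriv (fun z => f1 z t) y) x / V x t
            - deriv (fun y => f1 y t) x * deriv (fun y => V y t) x / (V x t)^2)
          - (1/3) * f1 x t * 𝒯 x t) t)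
    (hpde2 : ∀ x, ∀ t ∈ Set.Ico (0 : ℝ) T0,
      HasDerivAt (fun s => f2 x s)
        ((1 / V x t) * (deriv (fun y => deriv (fun z => f2 z t) y) x / V x t
            - deriv (fun y => f2 y t) x * deriv (fun y => V y t) x / (V x t)^2)
          - (1/3) * f2 x t * 𝒯 x t) t)
    (hpdeV : ∀ x, ∀ t ∈ Set.Ico (0 : ℝ) T0,
      HasDerivAt (fun s => V x s) ((1/3) * 𝒯 x t * V x t) t)
    (hf3 : f3 = fun x t => (f1 x t)⁻¹ * (f2 x t)⁻¹) :
    ∀ x, ∀ t ∈ Set.Ico (0 : ℝ) T0,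
      HasDerivAt (fun s => f3 x s)
        ((1 / V x t) * (deriv (fun y => deriv (fun z => f3 z t) y) x / V x t
            - deriv (fun y => f3 y t) x * deriv (fun y => V y t) x / (V x t)^2)
          - (1/3) * f3 x t * 𝒯 x t) t := by
  intro x t ht
  have ne1 : ∀ y, f1 y t ≠ 0 := fun y => (hf1pos y t).ne'
  have ne2 : ∀ y, f2 y t ≠ 0 := fun y => (hf2pos y t).ne'
  have neW : V x t ≠ 0 := (hVpos x t).ne'
  -- smoothness of the time-slices
  have hgC : ContDiff ℝ 2 (fun y => f1 y t) :=
    hf1smooth.comp (contDiff_id.prodMk contDiff_const)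
  have hqC : ContDiff ℝ 2 (fun y => f2 y t) :=
    hf2smooth.comp (contDiff_id.prodMk contDiff_const)
  have hgC2 : ContDiff ℝ ((1:ℕ) + 1) (fun y => f1 y t) := by exact_mod_cast hgC
  have hqC2 : ContDiff ℝ ((1:ℕ) + 1) (fun y => f2 y t) := by exact_mod_cast hqC
  have hgdiff : Differentiable ℝ (fun y => f1 y t) := hgC.differentiable (by norm_num)
  have hqdiff : Differentiable ℝ (fun y => f2 y t) := hqC.differentiable (by norm_num)
  have hg'diff : Differentiable ℝ (deriv (fun y => f1 y t)) :=
    ((contDiff_succ_iff_deriv.mp hgC2).2.2).differentiable (by norm_num)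
  have hq'diff : Differentiable ℝ (deriv (fun y => f2 y t)) :=
    ((contDiff_succ_iff_deriv.mp hqC2).2.2).differentiable (by norm_num)
  have hgd : ∀ y, HasDerivAt (fun z => f1 z t) (deriv (fun z => f1 z t) y) y :=
    fun y => (hgdiff y).hasDerivAt
  have hqd : ∀ y, HasDerivAt (fun z => f2 z t) (deriv (fun z => f2 z t) y) y :=
    fun y => (hqdiff y).hasDerivAt
  have hg'd : ∀ y, HasDerivAt (deriv (fun z => f1 z t)) (deriv (deriv (fun z => f1 z t)) y) y :=
    fun y => (hg'diff y).hasDerivAt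
  have hq'd : ∀ y, HasDerivAt (deriv (fun z => f2 z t)) (deriv (deriv (fun z => f2 z t)) y) y :=
    fun y => (hq'diff y).hasDerivAt
  -- first spatial derivative of f3
  have key1 : ∀ y, HasDerivAt (fun z => f3 z t)
      (-deriv (fun z => f1 z t) y / f1 y t ^ 2 * (f2 y t)⁻¹
        + (f1 y t)⁻¹ * (-deriv (fun z => f2 z t) y / f2 y t ^ 2)) y := by
    intro y
    simp only [hf3]
    exact ((hgd y).inv (ne1 y)).mul ((hqd y).inv (ne2 y))
  have hD1 : (deriv (fun z => f3 z t)) =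
      (fun y => -deriv (fun z => f1 z t) y / f1 y t ^ 2 * (f2 y t)⁻¹
        + (f1 y t)⁻¹ * (-deriv (fun z => f2 z t) y / f2 y t ^ 2)) :=
    funext fun y => (key1 y).deriv
  -- second spatial derivative of f3
  have key2 : HasDerivAt
      (fun y => -deriv (fun z => f1 z t) y / f1 y t ^ 2 * (f2 y t)⁻¹
        + (f1 y t)⁻¹ * (-deriv (fun z => f2 z t) y / f2 y t ^ 2))
      (((-deriv (deriv (fun z => f1 z t)) x * f1 x t ^ 2
          - -deriv (fun z => f1 z t) x * (2 * f1 x t ^ 1 * deriv (fun z => f1 z t) x))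
            / (f1 x t ^ 2) ^ 2) * (f2 x t)⁻¹
        + (-deriv (fun z => f1 z t) x / f1 x t ^ 2) * (-deriv (fun z => f2 z t) x / f2 x t ^ 2)
        + ((-deriv (fun z => f1 z t) x / f1 x t ^ 2) * (-deriv (fun z => f2 z t) x / f2 x t ^ 2)
          + (f1 x t)⁻¹ * ((-deriv (deriv (fun z => f2 z t)) x * f2 x t ^ 2
              - -deriv (fun z => f2 z t) x * (2 * f2 x t ^ 1 * deriv (fun z => f2 z t) x))
                / (f2 x t ^ 2) ^ 2))) x := by
    have h := ((((hg'd x).fun_neg.fun_div ((hgd x).fun_pow 2) (pow_ne_zero 2 (ne1 x))).fun_mul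
          ((hqd x).fun_inv (ne2 x))).fun_add
        (((hgd x).fun_inv (ne1 x)).fun_mul
          ((hq'd x).fun_neg.fun_div ((hqd x).fun_pow 2) (pow_ne_zero 2 (ne2 x)))))
    exact h.congr_deriv (by push_cast; ring)
  have h2nd : deriv (fun y => deriv (fun z => f3 z t) y) x =
      (((-deriv (deriv (fun z => f1 z t)) x * f1 x t ^ 2
          - -deriv (fun z => f1 z t) x * (2 * f1 x t ^ 1 * deriv (fun z => f1 z t) x))
            / (f1 x t ^ 2) ^ 2) * (f2 x t)⁻¹
        + (-deriv (fun z => f1 z t) x / f1 x t ^ 2) * (-deriv (fun z => f2 z t) x / f2 x t ^ 2)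
        + ((-deriv (fun z => f1 z t) x / f1 x t ^ 2) * (-deriv (fun z => f2 z t) x / f2 x t ^ 2)
          + (f1 x t)⁻¹ * ((-deriv (deriv (fun z => f2 z t)) x * f2 x t ^ 2
              - -deriv (fun z => f2 z t) x * (2 * f2 x t ^ 1 * deriv (fun z => f2 z t) x))
                / (f2 x t ^ 2) ^ 2))) := by
    rw [show (fun y => deriv (fun z => f3 z t) y) =
        (fun y => -deriv (fun z => f1 z t) y / f1 y t ^ 2 * (f2 y t)⁻¹
          + (f1 y t)⁻¹ * (-deriv (fun z => f2 z t) y / f2 y t ^ 2)) from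
      funext fun y => (key1 y).deriv]
    exact key2.deriv
  have hfx : deriv (fun y => f3 y t) x =
      -deriv (fun z => f1 z t) x / f1 x t ^ 2 * (f2 x t)⁻¹
        + (f1 x t)⁻¹ * (-deriv (fun z => f2 z t) x / f2 x t ^ 2) := (key1 x).deriv
  -- log derivatives
  have hlog1 : deriv (fun y => Real.log (f1 y t)) x
      = deriv (fun z => f1 z t) x / f1 x t := ((hgd x).log (ne1 x)).deriv
  have hlog2 : deriv (fun y => Real.log (f2 y t)) x
      = deriv (fun z => f2 z t) x / f2 x t := ((hqd x).log (ne2 x)).deriv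
  have hlog12 : deriv (fun y => Real.log (f1 y t) + Real.log (f2 y t)) x
      = deriv (fun z => f1 z t) x / f1 x t + deriv (fun z => f2 z t) x / f2 x t :=
    (((hgd x).log (ne1 x)).add ((hqd x).log (ne2 x))).deriv
  -- time derivative
  have Ht := ((hpde1 x t ht).fun_inv (ne1 x)).fun_mul ((hpde2 x t ht).fun_inv (ne2 x))
  rw [show (fun s => f3 x s) = fun s => (f1 x s)⁻¹ * (f2 x s)⁻¹ from by rw [hf3]]
  refine Ht.congr_deriv ?_
  rw [h2nd, hfx]
  simp only [hf3, h𝒯]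
  rw [hlog1, hlog2, hlog12]
  have hA := ne1 x
  have hB := ne2 x
  have hW := neW
  field_simp
  ring
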